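/- Let (X,d,m) be a uniformly locally doubling metric measure space and let f: X → ℝ be a Borel function. Endow X×ℝ with the distance d̃((x,t),(y,s)) = sqrt(d(x,y)² + (t−s)²) and the measure m⊗L¹, and let G_f = {(x,t) ∈ X×ℝ : t < f(x)} be the subgraph of f. Then: (i) if (x,t) belongs to the essential boundary ∂*G_f (computed in (X×ℝ, d̃, m⊗L¹)), then f^∧(x) ≤ t ≤ f^∨(x); (ii) if f^∧(x) < t < f^∨(x), then (x,t) ∈ ∂*G_f. In particular, if −∞ < f^∧(x) = f^∨(x) < +∞, then ∂*G_f ∩ ({x}×ℝ) ⊆ {(x, f̄(x))}, where f̄(x) = (f^∧(x)+f^∨(x))/2. -/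

import Mathlib

open MeasureTheory Filter Set Metric Topology
open scoped ENNReal NNReal

noncomputable section

/-- The ℓ² product distance on `X × ℝ`:
`d̃((x,t),(y,s)) = sqrt(d(x,y)² + (t−s)²)`. -/
def dist2 {X : Type*} [PseudoMetricSpace X] (p q : X × ℝ) : ℝ :=
  Real.sqrt (dist p.1 q.1 ^ 2 + (p.2 - q.2) ^ 2)

/-- Balls in `X × ℝ` with respect to the ℓ² product distance. -/
def ball2 {X : Type*} [PseudoMetricSpace X] (p : X × ℝ) (r : ℝ) : Set (X × ℝ) :=
  {q | dist2 p q < r}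

/-- The subgraph `G_f = {(x,t) : t < f(x)}` of a function `f : X → ℝ`. -/
def subgraph {X : Type*} (f : X → ℝ) : Set (X × ℝ) :=
  {p | p.2 < f p.1}

/-- The approximate lower limit `f^∧(x)`, with values in `EReal` and the
convention `sup ∅ = ⊥ = −∞`. -/
def apLowerLimit {X : Type*} [PseudoMetricSpace X] [MeasurableSpace X]
    (m : Measure X) (f : X → ℝ) (x : X) : EReal :=
  sSup {t : EReal |
    Tendsto (fun r : ℝ => m (Metric.ball x r ∩ {y | (f y : EReal) < t}) / m (Metric.ball x r))
      (𝓝[>] (0 : ℝ)) (𝓝 0)}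

/-- The approximate upper limit `f^∨(x)`, with values in `EReal` and the
convention `inf ∅ = ⊤ = +∞`. -/
def apUpperLimit {X : Type*} [PseudoMetricSpace X] [MeasurableSpace X]
    (m : Measure X) (f : X → ℝ) (x : X) : EReal :=
  sInf {t : EReal |
    Tendsto (fun r : ℝ => m (Metric.ball x r ∩ {y | t < (f y : EReal)}) / m (Metric.ball x r))
      (𝓝[>] (0 : ℝ)) (𝓝 0)}

/-- The essential boundary of a set `E ⊆ X × ℝ`, computed with respect to the measure `μ`
and the ℓ² product distance on `X × ℝ`: points where both `E` and its complement have
positive upper density. -/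
def essBoundary2 {X : Type*} [PseudoMetricSpace X] [MeasurableSpace X]
    (μ : Measure (X × ℝ)) (E : Set (X × ℝ)) : Set (X × ℝ) :=
  {p | 0 < limsup (fun r : ℝ => μ (E ∩ ball2 p r) / μ (ball2 p r)) (𝓝[>] (0 : ℝ)) ∧
       0 < limsup (fun r : ℝ => μ (ball2 p r \ E) / μ (ball2 p r)) (𝓝[>] (0 : ℝ))}

lemma ball2_subset_prod {X : Type*} [PseudoMetricSpace X] (x : X) (t r : ℝ) :
    ball2 (x, t) r ⊆ Metric.ball x r ×ˢ Ioo (t - r) (t + r) := by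
  rintro ⟨y, u⟩ h
  have h' : Real.sqrt (dist x y ^ 2 + (t - u) ^ 2) < r := h
  have hd : dist x y ≤ Real.sqrt (dist x y ^ 2 + (t - u) ^ 2) := by
    have := Real.sqrt_le_sqrt (show dist x y ^ 2 ≤ dist x y ^ 2 + (t - u) ^ 2 by
      nlinarith [sq_nonneg (t - u)])
    rwa [Real.sqrt_sq dist_nonneg] at this
  have he : |t - u| ≤ Real.sqrt (dist x y ^ 2 + (t - u) ^ 2) := by
    have := Real.sqrt_le_sqrt (show (t - u) ^ 2 ≤ dist x y ^ 2 + (t - u) ^ 2 by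
      nlinarith [sq_nonneg (dist x y)])
    rwa [Real.sqrt_sq_eq_abs] at this
  have h1 : dist x y < r := lt_of_le_of_lt hd h'
  have h2 : |t - u| < r := lt_of_le_of_lt he h'
  rw [abs_lt] at h2
  exact ⟨by rw [Metric.mem_ball, dist_comm]; exact h1,
    by constructor <;> [linarith [h2.2]; linarith [h2.1]]⟩

lemma prod_subset_ball2 {X : Type*} [PseudoMetricSpace X] (x : X) (t : ℝ) {r : ℝ} (hr : 0 < r) :
    Metric.ball x (r / 2) ×ˢ Ioo (t - r / 2) (t + r / 2) ⊆ ball2 (x, t) r := by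
  rintro ⟨y, u⟩ ⟨hy, hu⟩
  show Real.sqrt (dist x y ^ 2 + (t - u) ^ 2) < r
  rw [Real.sqrt_lt' hr]
  have h1 : dist x y < r / 2 := by rw [dist_comm]; exact hy
  have h2 : |t - u| < r / 2 := abs_lt.2 ⟨by linarith [hu.2], by linarith [hu.1]⟩
  have h3 : (0:ℝ) ≤ dist x y := dist_nonneg
  have h4 : (0:ℝ) ≤ |t - u| := abs_nonneg _
  nlinarith [sq_abs (t - u)]

lemma ratio_upper {X : Type*} [MetricSpace X] [MeasurableSpace X]
    (m : Measure X) (C : ℝ≥0∞) (hC0 : C ≠ 0) (hCt : C ≠ ⊤)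
    (x : X) (t : ℝ) (A : Set (X × ℝ)) (S : Set X) {r : ℝ} (hr : 0 < r)
    (hdb : m (Metric.ball x r) ≤ C * m (Metric.ball x (r / 2)))
    (hsub : ∀ y u, (y, u) ∈ A → y ∈ Metric.ball x r → u ∈ Ioo (t - r) (t + r) → y ∈ S) :
    m.prod volume (A ∩ ball2 (x, t) r) / m.prod volume (ball2 (x, t) r)
      ≤ 2 * C * (m (Metric.ball x r ∩ S) / m (Metric.ball x r)) := by
  set a := m (Metric.ball x r ∩ S) with ha
  set b := m (Metric.ball x (r / 2)) with hb
  set c := ENNReal.ofReal r with hc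
  have hc0 : c ≠ 0 := by simp [hc, hr, ENNReal.ofReal_pos.2 hr |>.ne']
  have hct : c ≠ ⊤ := ENNReal.ofReal_ne_top
  have hnum : m.prod volume (A ∩ ball2 (x, t) r) ≤ 2 * a * c := by
    calc m.prod volume (A ∩ ball2 (x, t) r)
        ≤ m.prod volume ((Metric.ball x r ∩ S) ×ˢ Ioo (t - r) (t + r)) := by
          apply measure_mono
          rintro ⟨y, u⟩ ⟨hA, hB⟩
          have hB' := ball2_subset_prod x t r hB
          exact ⟨⟨hB'.1, hsub y u hA hB'.1 hB'.2⟩, hB'.2⟩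
      _ = a * ENNReal.ofReal (2 * r) := by
          rw [Measure.prod_prod, Real.volume_Ioo]
          congr 1; ring_nf
      _ = 2 * a * c := by
          rw [ENNReal.ofReal_mul (by norm_num : (0:ℝ) ≤ 2)]
          simp [hc]; ring
  have hden : b * c ≤ m.prod volume (ball2 (x, t) r) := by
    calc b * c = m.prod volume (Metric.ball x (r / 2) ×ˢ Ioo (t - r / 2) (t + r / 2)) := by
          rw [Measure.prod_prod, Real.volume_Ioo]
          congr 1; · rw [hc]; congr 1; ring
      _ ≤ _ := measure_mono (prod_subset_ball2 x t hr)
  calc m.prod volume (A ∩ ball2 (x, t) r) / m.prod volume (ball2 (x, t) r)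
      ≤ (2 * a * c) / (b * c) := ENNReal.div_le_div hnum hden
    _ = (2 * a) / b := ENNReal.mul_div_mul_right _ _ hc0 hct
    _ = 2 * (a / b) := by rw [mul_div_assoc]
    _ = 2 * ((C * a) / (C * b)) := by rw [ENNReal.mul_div_mul_left _ _ hC0 hCt]
    _ ≤ 2 * ((C * a) / m (Metric.ball x r)) :=
        mul_le_mul_right (ENNReal.div_le_div_left hdb _) 2
    _ = 2 * C * (a / m (Metric.ball x r)) := by rw [mul_div_assoc, mul_assoc]

lemma ratio_lower {X : Type*} [MetricSpace X] [MeasurableSpace X]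
    (m : Measure X) (C : ℝ≥0∞) (hC0 : C ≠ 0) (hCt : C ≠ ⊤)
    (x : X) (t : ℝ) (A : Set (X × ℝ)) (S : Set X) {r α β : ℝ} (hr : 0 < r)
    (hα : t - r ≤ α) (hβ : β ≤ t + r) (hlen : r ≤ β - α)
    (hdb : m (Metric.ball x (2 * r)) ≤ C * m (Metric.ball x r))
    (hsub : ∀ y u, y ∈ Metric.ball x r → y ∈ S → u ∈ Ioo α β → (y, u) ∈ A) :
    (4 * C)⁻¹ * (m (Metric.ball x r ∩ S) / m (Metric.ball x r))
      ≤ m.prod volume (A ∩ ball2 (x, t) (2 * r)) / m.prod volume (ball2 (x, t) (2 * r)) := by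
  set a := m (Metric.ball x r ∩ S) with ha
  set b := m (Metric.ball x r) with hb
  set c := ENNReal.ofReal r with hc
  have hc0 : c ≠ 0 := (ENNReal.ofReal_pos.2 hr).ne'
  have hct : c ≠ ⊤ := ENNReal.ofReal_ne_top
  have h40 : (4 * C) ≠ 0 := by simp [hC0]
  have h4t : (4 * C) ≠ ⊤ := by finiteness
  have hnum : a * c ≤ m.prod volume (A ∩ ball2 (x, t) (2 * r)) := by
    calc a * c ≤ a * ENNReal.ofReal (β - α) :=
          mul_le_mul_right (ENNReal.ofReal_le_ofReal hlen) a
      _ = m.prod volume ((Metric.ball x r ∩ S) ×ˢ Ioo α β) := by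
          rw [Measure.prod_prod, Real.volume_Ioo]
      _ ≤ _ := by
          apply measure_mono
          rintro ⟨y, u⟩ ⟨⟨hy, hyS⟩, hu⟩
          refine ⟨hsub y u hy hyS hu, ?_⟩
          apply prod_subset_ball2 x t (by linarith : (0:ℝ) < 2 * r)
          have h2 : 2 * r / 2 = r := by ring
          rw [h2]
          exact ⟨hy, ⟨by linarith [hu.1], by linarith [hu.2]⟩⟩
  have hden : m.prod volume (ball2 (x, t) (2 * r)) ≤ (4 * C * b) * c := by
    calc m.prod volume (ball2 (x, t) (2 * r))
        ≤ m.prod volume (Metric.ball x (2 * r) ×ˢ Ioo (t - 2 * r) (t + 2 * r)) :=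
          measure_mono (ball2_subset_prod x t (2 * r))
      _ = m (Metric.ball x (2 * r)) * ENNReal.ofReal (4 * r) := by
          rw [Measure.prod_prod, Real.volume_Ioo]; congr 1; ring_nf
      _ ≤ (C * b) * (4 * c) := by
          rw [ENNReal.ofReal_mul (by norm_num : (0:ℝ) ≤ 4)]
          exact mul_le_mul' hdb (by simp [hc])
      _ = (4 * C * b) * c := by ring
  have key : (4 * C)⁻¹ * (a / b) = a / (4 * C * b) := by
    rw [div_eq_mul_inv, div_eq_mul_inv, ENNReal.mul_inv (Or.inl h40) (Or.inl h4t)]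
    ring
  calc (4 * C)⁻¹ * (a / b) = a / (4 * C * b) := key
    _ = (a * c) / ((4 * C * b) * c) := (ENNReal.mul_div_mul_right _ _ hc0 hct).symm
    _ ≤ _ := ENNReal.div_le_div hnum hden

/-- Let `(X,d,m)` be a uniformly locally doubling metric measure space and
`f : X → ℝ` a Borel function. Endow `X × ℝ` with the ℓ² product distance and the measure
`m ⊗ L¹`, and let `G_f` be the subgraph of `f`. Then:
(i) if `(x,t) ∈ ∂*G_f` then `f^∧(x) ≤ t ≤ f^∨(x)`;
(ii) if `f^∧(x) < t < f^∨(x)` then `(x,t) ∈ ∂*G_f`;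
(iii) if `−∞ < f^∧(x) = f^∨(x) < +∞` then `∂*G_f ∩ ({x} × ℝ) ⊆ {(x, f̄(x))}` where
`f̄(x) = (f^∧(x)+f^∨(x))/2`. -/
theorem statement0
    {X : Type*} [MetricSpace X] [CompleteSpace X] [TopologicalSpace.SeparableSpace X]
    [MeasurableSpace X] [BorelSpace X]
    (m : Measure X)
    (hbf : ∀ s : Set X, Bornology.IsBounded s → m s < ⊤)
    (hdbl : ∀ R : ℝ, 0 < R → ∃ C : ℝ≥0∞, 0 < C ∧ C < ⊤ ∧
      ∀ (x : X) (r : ℝ), 0 < r → r < R →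
        m (Metric.ball x (2 * r)) ≤ C * m (Metric.ball x r))
    (f : X → ℝ) (hf : Measurable f) :
    (∀ (x : X) (t : ℝ), (x, t) ∈ essBoundary2 (m.prod volume) (subgraph f) →
        apLowerLimit m f x ≤ (t : EReal) ∧ (t : EReal) ≤ apUpperLimit m f x) ∧
    (∀ (x : X) (t : ℝ), apLowerLimit m f x < (t : EReal) → (t : EReal) < apUpperLimit m f x →
        (x, t) ∈ essBoundary2 (m.prod volume) (subgraph f)) ∧
    (∀ x : X, ⊥ < apLowerLimit m f x → apLowerLimit m f x = apUpperLimit m f x →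
        apUpperLimit m f x < ⊤ →
        ∀ t : ℝ, (x, t) ∈ essBoundary2 (m.prod volume) (subgraph f) →
          (t : EReal) = (apLowerLimit m f x + apUpperLimit m f x) / 2) := by
  obtain ⟨C, hC0pos, hCtlt, hC⟩ := hdbl 1 one_pos
  have hC0 : C ≠ 0 := hC0pos.ne'
  have hCt : C ≠ ⊤ := hCtlt.ne
  have h2r : Tendsto (fun r : ℝ => 2 * r) (𝓝[>] (0:ℝ)) (𝓝[>] (0:ℝ)) := by
    apply tendsto_nhdsWithin_of_tendsto_nhds_of_eventually_within
    · have h : Tendsto (fun r : ℝ => 2 * r) (𝓝 (0:ℝ)) (𝓝 (2 * 0)) :=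
        (continuous_const.mul continuous_id).tendsto 0
      simpa using h.mono_left nhdsWithin_le_nhds
    · filter_upwards [self_mem_nhdsWithin] with r hr
      exact mul_pos two_pos (show (0:ℝ) < r from hr)
  have limsup_zero : ∀ g : ℝ → ℝ≥0∞, ¬ 0 < limsup g (𝓝[>] (0:ℝ)) →
      Tendsto g (𝓝[>] (0:ℝ)) (𝓝 0) := by
    intro g hg
    have h0 : limsup g (𝓝[>] (0:ℝ)) = 0 := le_antisymm (not_lt.1 hg) (zero_le)
    have h1 : liminf g (𝓝[>] (0:ℝ)) = 0 :=
      le_antisymm (h0 ▸ liminf_le_limsup) (zero_le)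
    exact tendsto_of_liminf_eq_limsup h1 h0
  have keyA : ∀ (x : X) (t : ℝ), (t : EReal) < apLowerLimit m f x →
      Tendsto (fun r : ℝ => m.prod volume (ball2 (x, t) r \ subgraph f) /
        m.prod volume (ball2 (x, t) r)) (𝓝[>] (0:ℝ)) (𝓝 0) := by
    intro x t ht
    obtain ⟨s', hs'S, hts'⟩ := lt_sSup_iff.1 ht
    obtain ⟨s, hts, hss'⟩ := EReal.exists_between_coe_real hts'
    have htreal : t < s := EReal.coe_lt_coe_iff.1 hts
    have hs0 : Tendsto (fun r : ℝ => m (Metric.ball x r ∩ {y | (f y : EReal) < (s : EReal)}) /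
        m (Metric.ball x r)) (𝓝[>] (0:ℝ)) (𝓝 0) := by
      refine tendsto_of_tendsto_of_tendsto_of_le_of_le tendsto_const_nhds hs'S
        (fun r => zero_le) (fun r => ?_)
      refine ENNReal.div_le_div (measure_mono (inter_subset_inter_right _ ?_)) le_rfl
      exact fun y hy => lt_trans hy hss'
    have hmul : Tendsto (fun r : ℝ => 2 * C *
        (m (Metric.ball x r ∩ {y | (f y : EReal) < (s : EReal)}) / m (Metric.ball x r)))
        (𝓝[>] (0:ℝ)) (𝓝 0) := by
      have h := ENNReal.Tendsto.const_mul (a := 2 * C) hs0 (Or.inr (by finiteness))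
      simpa using h
    refine tendsto_of_tendsto_of_tendsto_of_le_of_le' tendsto_const_nhds hmul
      (Eventually.of_forall fun r => zero_le) ?_
    filter_upwards [Ioo_mem_nhdsGT_of_mem
      ⟨le_refl (0:ℝ), lt_min one_pos (by linarith : (0:ℝ) < s - t)⟩] with r hrI
    obtain ⟨hr0, hr2⟩ := hrI
    have hr1 : r < 1 := lt_of_lt_of_le hr2 (min_le_left _ _)
    have hrst : r < s - t := lt_of_lt_of_le hr2 (min_le_right _ _)
    have hdb : m (Metric.ball x r) ≤ C * m (Metric.ball x (r / 2)) := by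
      have h := hC x (r / 2) (by linarith) (by linarith)
      rwa [show 2 * (r / 2) = r by ring] at h
    rw [Set.diff_eq_compl_inter]
    refine ratio_upper m C hC0 hCt x t (subgraph f)ᶜ
      {y | (f y : EReal) < (s : EReal)} hr0 hdb ?_
    intro y u hA hy hu
    have h1 : f y ≤ u := not_lt.1 hA
    exact EReal.coe_lt_coe_iff.2 (by have := hu.2; simp only [mem_Ioo] at hu; linarith [hu.2])
  have keyB : ∀ (x : X) (t : ℝ), apUpperLimit m f x < (t : EReal) →
      Tendsto (fun r : ℝ => m.prod volume (subgraph f ∩ ball2 (x, t) r) /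
        m.prod volume (ball2 (x, t) r)) (𝓝[>] (0:ℝ)) (𝓝 0) := by
    intro x t ht
    obtain ⟨s', hs'S, hs't⟩ := sInf_lt_iff.1 ht
    obtain ⟨s, hs's, hst⟩ := EReal.exists_between_coe_real hs't
    have htreal : s < t := EReal.coe_lt_coe_iff.1 hst
    have hs0 : Tendsto (fun r : ℝ => m (Metric.ball x r ∩ {y | (s : EReal) < (f y : EReal)}) /
        m (Metric.ball x r)) (𝓝[>] (0:ℝ)) (𝓝 0) := by
      refine tendsto_of_tendsto_of_tendsto_of_le_of_le tendsto_const_nhds hs'S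
        (fun r => zero_le) (fun r => ?_)
      refine ENNReal.div_le_div (measure_mono (inter_subset_inter_right _ ?_)) le_rfl
      exact fun y hy => lt_trans hs's hy
    have hmul : Tendsto (fun r : ℝ => 2 * C *
        (m (Metric.ball x r ∩ {y | (s : EReal) < (f y : EReal)}) / m (Metric.ball x r)))
        (𝓝[>] (0:ℝ)) (𝓝 0) := by
      have h := ENNReal.Tendsto.const_mul (a := 2 * C) hs0 (Or.inr (by finiteness))
      simpa using h
    refine tendsto_of_tendsto_of_tendsto_of_le_of_le' tendsto_const_nhds hmul
      (Eventually.of_forall fun r => zero_le) ?_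
    filter_upwards [Ioo_mem_nhdsGT_of_mem
      ⟨le_refl (0:ℝ), lt_min one_pos (by linarith : (0:ℝ) < t - s)⟩] with r hrI
    obtain ⟨hr0, hr2⟩ := hrI
    have hr1 : r < 1 := lt_of_lt_of_le hr2 (min_le_left _ _)
    have hrst : r < t - s := lt_of_lt_of_le hr2 (min_le_right _ _)
    have hdb : m (Metric.ball x r) ≤ C * m (Metric.ball x (r / 2)) := by
      have h := hC x (r / 2) (by linarith) (by linarith)
      rwa [show 2 * (r / 2) = r by ring] at h
    refine ratio_upper m C hC0 hCt x t (subgraph f)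
      {y | (s : EReal) < (f y : EReal)} hr0 hdb ?_
    intro y u hA hy hu
    have h1 : u < f y := hA
    exact EReal.coe_lt_coe_iff.2 (by simp only [mem_Ioo] at hu; linarith [hu.1])
  have part1 : ∀ (x : X) (t : ℝ), (x, t) ∈ essBoundary2 (m.prod volume) (subgraph f) →
      apLowerLimit m f x ≤ (t : EReal) ∧ (t : EReal) ≤ apUpperLimit m f x := by
    rintro x t ⟨h1, h2⟩
    constructor
    · by_contra h
      rw [not_le] at h
      rw [(keyA x t h).limsup_eq] at h2
      exact lt_irrefl _ h2
    · by_contra h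
      rw [not_le] at h
      rw [(keyB x t h).limsup_eq] at h1
      exact lt_irrefl _ h1
  have part2 : ∀ (x : X) (t : ℝ), apLowerLimit m f x < (t : EReal) →
      (t : EReal) < apUpperLimit m f x →
      (x, t) ∈ essBoundary2 (m.prod volume) (subgraph f) := by
    intro x t hl hu
    constructor
    · -- density of the subgraph is positive, using t < f^∨
      by_contra hpos
      have htend := limsup_zero _ hpos
      obtain ⟨s, hts, hs'⟩ := EReal.exists_between_coe_real hu
      have htreal : t < s := EReal.coe_lt_coe_iff.1 hts
      have hmem : Tendsto (fun r : ℝ =>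
          m (Metric.ball x r ∩ {y | ((s : ℝ) : EReal) < (f y : EReal)}) / m (Metric.ball x r))
          (𝓝[>] (0:ℝ)) (𝓝 0) := by
        have hcomp := htend.comp h2r
        have hmul : Tendsto (fun r : ℝ => 4 * C *
            (m.prod volume (subgraph f ∩ ball2 (x, t) (2 * r)) /
              m.prod volume (ball2 (x, t) (2 * r)))) (𝓝[>] (0:ℝ)) (𝓝 0) := by
          have h := ENNReal.Tendsto.const_mul (a := 4 * C) hcomp (Or.inr (by finiteness))
          simpa [Function.comp] using h
        refine tendsto_of_tendsto_of_tendsto_of_le_of_le' tendsto_const_nhds hmul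
          (Eventually.of_forall fun r => zero_le) ?_
        filter_upwards [Ioo_mem_nhdsGT_of_mem
          ⟨le_refl (0:ℝ), lt_min one_pos (by linarith : (0:ℝ) < s - t)⟩] with r hrI
        obtain ⟨hr0, hr2⟩ := hrI
        have hr1 : r < 1 := lt_of_lt_of_le hr2 (min_le_left _ _)
        have hrst : r < s - t := lt_of_lt_of_le hr2 (min_le_right _ _)
        have hlow := ratio_lower m C hC0 hCt x t (subgraph f)
          {y | ((s : ℝ) : EReal) < (f y : EReal)} (α := t) (β := t + r) hr0
          (by linarith) (le_refl _) (by linarith) (hC x r hr0 hr1) ?_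
        · calc m (Metric.ball x r ∩ {y | ((s : ℝ) : EReal) < (f y : EReal)}) /
              m (Metric.ball x r)
              = 4 * C * ((4 * C)⁻¹ *
                (m (Metric.ball x r ∩ {y | ((s : ℝ) : EReal) < (f y : EReal)}) /
                  m (Metric.ball x r))) := by
                rw [← mul_assoc, ENNReal.mul_inv_cancel (by simp [hC0]) (by finiteness), one_mul]
            _ ≤ 4 * C * (m.prod volume (subgraph f ∩ ball2 (x, t) (2 * r)) /
                m.prod volume (ball2 (x, t) (2 * r))) := mul_le_mul_right hlow _
        · intro y u hy hyS hu'
          have hsf : s < f y := EReal.coe_lt_coe_iff.1 hyS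
          show u < f y
          simp only [mem_Ioo] at hu'
          linarith [hu'.2]
      exact absurd (show apUpperLimit m f x ≤ ((s : ℝ) : EReal) from sInf_le hmem) (not_le.2 hs')
    · -- density of the complement is positive, using f^∧ < t
      by_contra hpos
      have htend := limsup_zero _ hpos
      obtain ⟨s, hs', hst⟩ := EReal.exists_between_coe_real hl
      have htreal : s < t := EReal.coe_lt_coe_iff.1 hst
      have hmem : Tendsto (fun r : ℝ =>
          m (Metric.ball x r ∩ {y | (f y : EReal) < ((s : ℝ) : EReal)}) / m (Metric.ball x r))
          (𝓝[>] (0:ℝ)) (𝓝 0) := by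
        have hcomp := htend.comp h2r
        have hmul : Tendsto (fun r : ℝ => 4 * C *
            (m.prod volume (ball2 (x, t) (2 * r) \ subgraph f) /
              m.prod volume (ball2 (x, t) (2 * r)))) (𝓝[>] (0:ℝ)) (𝓝 0) := by
          have h := ENNReal.Tendsto.const_mul (a := 4 * C) hcomp (Or.inr (by finiteness))
          simpa [Function.comp] using h
        refine tendsto_of_tendsto_of_tendsto_of_le_of_le' tendsto_const_nhds hmul
          (Eventually.of_forall fun r => zero_le) ?_
        filter_upwards [Ioo_mem_nhdsGT_of_mem
          ⟨le_refl (0:ℝ), lt_min one_pos (by linarith : (0:ℝ) < t - s)⟩] with r hrI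
        obtain ⟨hr0, hr2⟩ := hrI
        have hr1 : r < 1 := lt_of_lt_of_le hr2 (min_le_left _ _)
        have hrst : r < t - s := lt_of_lt_of_le hr2 (min_le_right _ _)
        have hlow := ratio_lower m C hC0 hCt x t (subgraph f)ᶜ
          {y | (f y : EReal) < ((s : ℝ) : EReal)} (α := t - r) (β := t) hr0
          (le_refl _) (by linarith) (by linarith) (hC x r hr0 hr1) ?_
        · calc m (Metric.ball x r ∩ {y | (f y : EReal) < ((s : ℝ) : EReal)}) /
              m (Metric.ball x r)
              = 4 * C * ((4 * C)⁻¹ *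
                (m (Metric.ball x r ∩ {y | (f y : EReal) < ((s : ℝ) : EReal)}) /
                  m (Metric.ball x r))) := by
                rw [← mul_assoc, ENNReal.mul_inv_cancel (by simp [hC0]) (by finiteness), one_mul]
            _ ≤ 4 * C * (m.prod volume ((subgraph f)ᶜ ∩ ball2 (x, t) (2 * r)) /
                m.prod volume (ball2 (x, t) (2 * r))) := mul_le_mul_right hlow _
            _ = 4 * C * (m.prod volume (ball2 (x, t) (2 * r) \ subgraph f) /
                m.prod volume (ball2 (x, t) (2 * r))) := by
                rw [Set.diff_eq_compl_inter]
        · intro y u hy hyS hu'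
          have hsf : f y < s := EReal.coe_lt_coe_iff.1 hyS
          show (y, u) ∈ (subgraph f)ᶜ
          simp only [subgraph, mem_compl_iff, mem_setOf_eq, not_lt]
          simp only [mem_Ioo] at hu'
          linarith [hu'.1]
      exact absurd (show ((s : ℝ) : EReal) ≤ apLowerLimit m f x from le_sSup hmem) (not_le.2 hs')
  refine ⟨part1, part2, ?_⟩
  intro x _hbot heq _htop t hmemB
  obtain ⟨h1, h2⟩ := part1 x t hmemB
  have e1 : apLowerLimit m f x = (t : EReal) := le_antisymm h1 (by rw [heq]; exact h2)
  have e2 : apUpperLimit m f x = (t : EReal) := heq.symm.trans e1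
  rw [e1, e2]
  have hhalf : ((t + t) / 2 : ℝ) = t := by ring
  calc (t : EReal) = (((t + t) / 2 : ℝ) : EReal) := by rw [hhalf]
    _ = (((t + t : ℝ)) : EReal) / (((2 : ℝ)) : EReal) := EReal.coe_div _ _
    _ = ((t : EReal) + (t : EReal)) / 2 := by norm_cast

end
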